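/- Let H : [0,1]^q → [0,1]^q be a C² map with components H_1,…,H_q such that for every j ≠ k and every l, both ∂²H_l/∂f_j∂f_k = 0 and (∂H_l/∂f_j)·(∂H_l/∂f_k) = 0 hold everywhere on the open cube, and suppose each H_l has a nonvanishing gradient at every point. Then each component H_l depends on at most one coordinate: there exists l' and a univariate function h_l such that H_l(f) = h_l(f_{l'}) for all f. -/

import Mathlib

open Set

/-- If `H : [0,1]^q → [0,1]^q` is `C²` on the open cube, and for every component `l`
and every pair `j ≠ k` the mixed second partial vanishes and the product of the two
first partials vanishes, while the gradient of each component never vanishes, then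
each component depends on at most one coordinate. -/
theorem stmt2 (q : ℕ) (H : (Fin q → ℝ) → (Fin q → ℝ))
    (S : Set (Fin q → ℝ)) (hS : S = {f | ∀ i, f i ∈ Ioo (0:ℝ) 1})
    (hreg : ∀ l, ContDiffOn ℝ 2 (fun f => H f l) S)
    (hmixed : ∀ l, ∀ j k : Fin q, j ≠ k → ∀ f ∈ S,
      fderiv ℝ (fun x => fderiv ℝ (fun y => H y l) x (Pi.single j 1)) f (Pi.single k 1) = 0)
    (hprod : ∀ l, ∀ j k : Fin q, j ≠ k → ∀ f ∈ S,
      (fderiv ℝ (fun y => H y l) f (Pi.single j 1)) *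
        (fderiv ℝ (fun y => H y l) f (Pi.single k 1)) = 0)
    (hgrad : ∀ l, ∀ f ∈ S, ∃ j, fderiv ℝ (fun y => H y l) f (Pi.single j 1) ≠ 0) :
    ∀ l, ∃ (l' : Fin q) (h : ℝ → ℝ), ∀ f ∈ S, H f l = h (f l') := by
  intro l
  have hSeq : S = Set.pi Set.univ (fun _ : Fin q => Ioo (0:ℝ) 1) := by
    rw [hS]; ext f; simp [Set.mem_pi]
  have hSopen : IsOpen S := by
    rw [hSeq]; exact isOpen_set_pi Set.finite_univ (fun i _ => isOpen_Ioo)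
  have hSconv : Convex ℝ S := by
    rw [hSeq]; exact convex_pi (fun i _ => convex_Ioo 0 1)
  set g : (Fin q → ℝ) → ℝ := fun f => H f l with hgdef
  have hdiff : ∀ f ∈ S, DifferentiableAt ℝ g f := fun f hf =>
    ((hreg l).differentiableOn (by norm_num)).differentiableAt (hSopen.mem_nhds hf)
  set D : Fin q → (Fin q → ℝ) → ℝ := fun j f => fderiv ℝ g f (Pi.single j 1) with hD
  have hcont : ∀ j, ContinuousOn (D j) S := by
    intro j
    have h1 : ContinuousOn (fderiv ℝ g) S :=
      (hreg l).continuousOn_fderiv_of_isOpen hSopen (by norm_num)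
    exact h1.clm_apply continuousOn_const
  set c : Fin q → ℝ := fun _ => (1/2 : ℝ) with hcdef
  have hc : c ∈ S := by rw [hS]; intro i; constructor <;> norm_num
  obtain ⟨j₀, hj₀⟩ := hgrad l c hc
  have hj₀' : D j₀ c ≠ 0 := hj₀
  -- all other partials vanish on S
  have key : ∀ f ∈ S, ∀ j, j ≠ j₀ → D j f = 0 := by
    set U : Set (Fin q → ℝ) := S ∩ (D j₀) ⁻¹' {(0:ℝ)}ᶜ with hU
    have hUopen : IsOpen U := (hcont j₀).isOpen_inter_preimage hSopen isOpen_compl_singleton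
    set V : Set (Fin q → ℝ) := ⋃ j ∈ ({j₀}ᶜ : Set (Fin q)), S ∩ (D j) ⁻¹' {(0:ℝ)}ᶜ with hV
    have hVopen : IsOpen V := isOpen_biUnion fun j _ =>
      (hcont j).isOpen_inter_preimage hSopen isOpen_compl_singleton
    have hcover : S ⊆ U ∪ V := by
      intro f hf
      obtain ⟨j, hj⟩ := hgrad l f hf
      by_cases hjj : j = j₀
      · left; exact ⟨hf, by simpa [hjj] using hj⟩
      · right; exact mem_biUnion (by simpa using hjj) ⟨hf, hj⟩
    have hdisj : ¬ (S ∩ (U ∩ V)).Nonempty := by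
      rintro ⟨f, hfS, hfU, hfV⟩
      simp only [hV, mem_iUnion, mem_inter_iff, mem_preimage, mem_compl_iff,
        mem_singleton_iff, exists_prop] at hfV
      obtain ⟨j, hjne, hfS', hj⟩ := hfV
      have hp := hprod l j j₀ hjne f hfS
      have hU0 : D j₀ f ≠ 0 := hfU.2
      exact (mul_ne_zero hj hU0) hp
    have hVe : ¬ (S ∩ V).Nonempty := by
      intro hVne
      exact hdisj (hSconv.isPreconnected U V hUopen hVopen hcover
        ⟨c, hc, hc, by simpa using hj₀'⟩ hVne)
    intro f hf j hj
    by_contra hne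
    exact hVe ⟨f, hf, mem_biUnion (by simpa using hj) ⟨hf, hne⟩⟩
  refine ⟨j₀, fun t => g (Function.update c j₀ t), ?_⟩
  intro f hf
  have hfI : ∀ i, f i ∈ Ioo (0:ℝ) 1 := by rw [hS] at hf; exact hf
  set b : Fin q → ℝ := Function.update c j₀ (f j₀) with hbdef
  have hb : b ∈ S := by
    rw [hS]; intro i
    by_cases hi : i = j₀
    · subst hi; simpa [hbdef] using hfI i
    · simp only [hbdef, Function.update_of_ne hi, hcdef]
      constructor <;> norm_num
  have hbj : b j₀ = f j₀ := Function.update_self j₀ (f j₀) c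
  -- the directional derivative along b - f vanishes on S
  have hfd0 : ∀ x ∈ S, fderiv ℝ g x (b - f) = 0 := by
    intro x hx
    have hv : (b - f) = ∑ j, ((b - f) j) • (Pi.single j (1:ℝ) : Fin q → ℝ) := by
      funext i
      rw [Finset.sum_apply]
      simp [Pi.single_apply]
    rw [hv, map_sum]
    refine Finset.sum_eq_zero fun j _ => ?_
    rw [(fderiv ℝ g x).map_smul]
    by_cases hj : j = j₀
    · subst hj
      have : (b - f) j = 0 := by simp [hbj]
      simp [this]
    · have := key x hx j hj
      simp only [hD] at this
      simp [this]
  -- path from f to b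
  set γ : ℝ → (Fin q → ℝ) := fun t => (1 - t) • f + t • b with hγdef
  have hγmem : ∀ t ∈ Icc (0:ℝ) 1, γ t ∈ S := fun t ht =>
    hSconv hf hb (by linarith [ht.2]) ht.1 (by ring)
  have hψ : ∀ t ∈ Icc (0:ℝ) 1, HasDerivAt (fun t => g (γ t)) 0 t := by
    intro t ht
    have hA : HasDerivAt (fun t : ℝ => 1 - t) (-1) t := by
      exact (hasDerivAt_id t).const_sub (1:ℝ)
    have hγd : HasDerivAt γ (b - f) t := by
      have h1 : HasDerivAt (fun y : ℝ => (1 - y) • f + y • b) ((-1:ℝ) • f + (1:ℝ) • b) t :=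
        (hA.smul_const f).add ((hasDerivAt_id t).smul_const b)
      simpa only [neg_one_smul, one_smul, neg_add_eq_sub] using h1
    have hgd : HasFDerivAt g (fderiv ℝ g (γ t)) (γ t) :=
      (hdiff (γ t) (hγmem t ht)).hasFDerivAt
    have := hgd.comp_hasDerivAt t hγd
    rw [hfd0 (γ t) (hγmem t ht)] at this
    exact this
  have hconst := constant_of_has_deriv_right_zero
    (f := fun t => g (γ t)) (a := (0:ℝ)) (b := 1)
    (fun t ht => (hψ t ht).continuousAt.continuousWithinAt)
    (fun t ht => ((hψ t (Ico_subset_Icc_self ht)).hasDerivWithinAt))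
  have h10 := hconst 1 (by norm_num)
  change g (γ 1) = g (γ 0) at h10
  have hγ0 : γ 0 = f := by simp [hγdef]
  have hγ1 : γ 1 = b := by simp [hγdef]
  rw [hγ0, hγ1] at h10
  show g f = g b
  exact h10.symm
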